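/- Let R be a right Σ-V ring. Then the following are equivalent: (1) every iso-simple right R-module is injective; (2) every iso-artinian right R-module is injective and semisimple. -/

import Mathlib

universe u

open MulOpposite

/-- A right `A`-module `M` is Σ-injective if the direct sum of any family of copies of `M`
is injective. -/
def IsSigmaInjective (A : Type u) [Ring A] (M : Type u) [AddCommGroup M] [Module A M] : Prop :=
  ∀ ι : Type u, Module.Injective A (ι →₀ M)

/-- `R` is a right Σ-V ring: every simple right `R`-module is Σ-injective.
Right `R`-modules are modules over `Rᵐᵒᵖ`. -/
def IsRightSigmaVRing (R : Type u) [Ring R] : Prop :=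
  ∀ (S : Type u) [AddCommGroup S] [Module Rᵐᵒᵖ S],
    IsSimpleModule Rᵐᵒᵖ S → IsSigmaInjective Rᵐᵒᵖ S

/-- A nonzero module is iso-simple if it is isomorphic to each of its nonzero submodules. -/
def IsIsoSimpleModule (A : Type u) [Ring A] (M : Type u) [AddCommGroup M] [Module A M] : Prop :=
  Nontrivial M ∧ ∀ N : Submodule A M, N ≠ ⊥ → Nonempty (M ≃ₗ[A] N)

/-- A module `M` is iso-artinian if for every descending chain `M₁ ≥ M₂ ≥ ⋯` of submodules
of `M` there exists `n` such that `Mₙ ≅ Mᵢ` for all `i ≥ n`. -/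
def IsIsoArtinian (A : Type u) [Ring A] (M : Type u) [AddCommGroup M] [Module A M] : Prop :=
  ∀ f : ℕ → Submodule A M, (∀ n, f (n + 1) ≤ f n) →
    ∃ n, ∀ i, n ≤ i → Nonempty ((f n) ≃ₗ[A] (f i))

section Aux

variable {A : Type u} [Ring A]


theorem injCongr {M N : Type u} [AddCommGroup M] [Module A M] [AddCommGroup N] [Module A N]
    (e : M ≃ₗ[A] N) (h : Module.Injective A M) : Module.Injective A N := by
  constructor
  intro X Y _ _ _ _ f hf g
  obtain ⟨h', hh'⟩ := h.out f hf (e.symm.toLinearMap.comp g)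
  refine ⟨e.toLinearMap.comp h', fun x => ?_⟩
  simp [hh' x]

theorem injSubsingleton {M : Type u} [AddCommGroup M] [Module A M] [Subsingleton M] :
    Module.Injective A M :=
  ⟨fun _ _ _ _ _ _ _ _ _ => ⟨0, fun _ => Subsingleton.elim _ _⟩⟩

theorem injProd {M N : Type u} [AddCommGroup M] [Module A M] [AddCommGroup N] [Module A N]
    (hM : Module.Injective A M) (hN : Module.Injective A N) : Module.Injective A (M × N) := by
  constructor
  intro X Y _ _ _ _ f hf g
  obtain ⟨h1, hh1⟩ := hM.out f hf ((LinearMap.fst A M N).comp g)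
  obtain ⟨h2, hh2⟩ := hN.out f hf ((LinearMap.snd A M N).comp g)
  refine ⟨h1.prod h2, fun x => ?_⟩
  have e1 := hh1 x
  have e2 := hh2 x
  simp only [LinearMap.comp_apply, LinearMap.fst_apply, LinearMap.snd_apply] at e1 e2
  simp [LinearMap.prod_apply, e1, e2]

theorem sigmaInjCongr {M N : Type u} [AddCommGroup M] [Module A M] [AddCommGroup N] [Module A N]
    (e : M ≃ₗ[A] N) (h : IsSigmaInjective A M) : IsSigmaInjective A N :=
  fun ι => injCongr (Finsupp.mapRange.linearEquiv e) (h ι)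

theorem injOfSigmaInj {M : Type u} [AddCommGroup M] [Module A M]
    (h : IsSigmaInjective A M) : Module.Injective A M :=
  injCongr (Finsupp.LinearEquiv.finsuppUnique A M PUnit) (h PUnit)

theorem existsIsComplOfInj {M : Type u} [AddCommGroup M] [Module A M] (p : Submodule A M)
    (h : Module.Injective A p) : ∃ q, IsCompl p q := by
  obtain ⟨r, hr⟩ := h.out p.subtype p.injective_subtype LinearMap.id
  refine ⟨LinearMap.ker r, ⟨?_, ?_⟩⟩
  · rw [Submodule.disjoint_def]
    intro x hxp hxk
    rw [LinearMap.mem_ker] at hxk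
    have h1 : r x = ⟨x, hxp⟩ := by simpa using hr ⟨x, hxp⟩
    have h2 : (⟨x, hxp⟩ : p) = 0 := by rw [← h1, hxk]
    simpa using congrArg Subtype.val h2
  · rw [codisjoint_iff, eq_top_iff]
    intro x _
    have h2 : r ((r x : M)) = r x := hr (r x)
    refine Submodule.mem_sup.mpr ⟨(r x : M), (r x).2, x - (r x : M), ?_, by abel⟩
    rw [LinearMap.mem_ker, map_sub, h2, sub_self]

theorem equivOfNonzeroSimple {M N : Type u} [AddCommGroup M] [Module A M] [AddCommGroup N]
    [Module A N] [IsSimpleModule A M] [IsSimpleModule A N] (φ : M →ₗ[A] N) (hφ : φ ≠ 0) :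
    Nonempty (M ≃ₗ[A] N) := by
  have hker : LinearMap.ker φ = ⊥ := by
    rcases eq_bot_or_eq_top (LinearMap.ker φ) with h | h
    · exact h
    · exact absurd (LinearMap.ker_eq_top.mp h) hφ
  have hrange : LinearMap.range φ = ⊤ := by
    rcases eq_bot_or_eq_top (LinearMap.range φ) with h | h
    · exact absurd (LinearMap.range_eq_bot.mp h) hφ
    · exact h
  exact ⟨LinearEquiv.ofBijective φ ⟨LinearMap.ker_eq_bot.mp hker, LinearMap.range_eq_top.mp hrange⟩⟩

theorem blockDisjoint {N : Type u} [AddCommGroup N] [Module A N] {ι : Type u}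
    (S : ι → Submodule A N) (hInd : iSupIndep S) (s : Set ι) :
    Disjoint (⨆ i ∈ s, S i) (⨆ i ∈ sᶜ, S i) := by
  classical
  rw [Submodule.disjoint_def]
  intro x hx hx'
  rw [Submodule.mem_biSup_iff_exists_dfinsupp] at hx hx'
  obtain ⟨f, hf⟩ := hx
  obtain ⟨g, hg⟩ := hx'
  have hinj := hInd.dfinsupp_lsum_injective
  have heq : f.filter (· ∈ s) = g.filter (· ∈ sᶜ) := hinj (hf.trans hg.symm)
  have hzero : f.filter (· ∈ s) = 0 := by
    ext i
    by_cases hi : i ∈ s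
    · have h3 := DFunLike.congr_fun heq i
      simp only [DFinsupp.filter_apply, hi, Set.mem_compl_iff, not_true, if_true, if_false,
        DFinsupp.zero_apply, reduceIte] at h3 ⊢
      simpa using h3
    · simp [DFinsupp.filter_apply, hi]
  rw [hzero, map_zero] at hf
  exact hf.symm


theorem injOfInternalHomog {P : Type u} [AddCommGroup P] [Module A P] {ι : Type u}
    [DecidableEq ι] (B : ι → Submodule A P) (hint : DirectSum.IsInternal B)
    (T : Type u) [AddCommGroup T] [Module A T]
    (hT : ∀ i, Nonempty (↥(B i) ≃ₗ[A] T)) (hS : IsSigmaInjective A T) :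
    Module.Injective A P := by
  classical
  have e1 : (Π₀ i, ↥(B i)) ≃ₗ[A] P := LinearEquiv.ofBijective (DirectSum.coeLinearMap B) hint
  have e2 : (Π₀ i, ↥(B i)) ≃ₗ[A] Π₀ _ : ι, T :=
    DFinsupp.mapRange.linearEquiv fun i => (hT i).some
  have e3 : (ι →₀ T) ≃ₗ[A] Π₀ _ : ι, T := finsuppLequivDFinsupp A
  exact injCongr (e3.trans (e2.symm.trans e1)) (hS ι)

theorem simpleLeBiSupIso {N : Type u} [AddCommGroup N] [Module A N] {ι : Type u}
    (S : ι → Submodule A N) (hInd : iSupIndep S) (hS : ∀ i, IsSimpleModule A ↥(S i))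
    (J : Set ι) (L : Submodule A N) (hL : IsSimpleModule A ↥L) (hle : L ≤ ⨆ i ∈ J, S i) :
    ∃ i ∈ J, Nonempty (↥L ≃ₗ[A] ↥(S i)) := by
  classical
  have hint := DirectSum.isInternal_biSup_submodule_of_iSupIndep (A := S) J
    (hInd.comp Subtype.val_injective)
  set B : J → Submodule A ↥(⨆ i ∈ J, S i) :=
    fun i => (S i).comap (⨆ i ∈ J, S i).subtype with hB
  have e : (Π₀ i, ↥(B i)) ≃ₗ[A] ↥(⨆ i ∈ J, S i) :=
    LinearEquiv.ofBijective (DirectSum.coeLinearMap B) hint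
  haveI := hL
  haveI : Nontrivial ↥L := IsSimpleModule.nontrivial A ↥L
  obtain ⟨y, hy⟩ := exists_ne (0 : ↥L)
  have hxq : (y : N) ∈ ⨆ i ∈ J, S i := hle y.2
  have hx'0 : (⟨y, hxq⟩ : ↥(⨆ i ∈ J, S i)) ≠ 0 := by
    intro h
    apply hy
    apply Subtype.ext
    simpa using congrArg Subtype.val h
  have hd : e.symm ⟨y, hxq⟩ ≠ 0 := fun h => hx'0 (by
    have := congrArg e h
    rwa [e.apply_symm_apply, map_zero] at this)
  obtain ⟨j, hj⟩ : ∃ j, e.symm ⟨y, hxq⟩ j ≠ 0 := by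
    by_contra h
    push_neg at h
    exact hd (DFinsupp.ext h)
  have eL : ↥(L.comap (⨆ i ∈ J, S i).subtype) ≃ₗ[A] ↥L := Submodule.comapSubtypeEquivOfLe hle
  have eB : ↥(B j) ≃ₗ[A] ↥(S j) := Submodule.comapSubtypeEquivOfLe (le_biSup S j.2)
  haveI : IsSimpleModule A ↥(L.comap (⨆ i ∈ J, S i).subtype) := IsSimpleModule.congr eL
  haveI : IsSimpleModule A ↥(S j) := hS j
  haveI : IsSimpleModule A ↥(B j) := IsSimpleModule.congr eB
  set φ : ↥(L.comap (⨆ i ∈ J, S i).subtype) →ₗ[A] ↥(B j) :=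
    (DFinsupp.lapply j).comp (e.symm.toLinearMap.comp (L.comap (⨆ i ∈ J, S i).subtype).subtype)
    with hφ
  have hy' : (⟨y, hxq⟩ : ↥(⨆ i ∈ J, S i)) ∈ L.comap (⨆ i ∈ J, S i).subtype := y.2
  have hφval : φ ⟨⟨y, hxq⟩, hy'⟩ = e.symm ⟨y, hxq⟩ j := rfl
  have hφ0 : φ ≠ 0 := by
    intro h0
    apply hj
    rw [← hφval, h0]
    simp
  obtain ⟨w⟩ := equivOfNonzeroSimple φ hφ0
  exact ⟨j, j.2, ⟨eL.symm.trans (w.trans eB)⟩⟩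


theorem keyInd (n : ℕ) :
    ∀ {N : Type u} [AddCommGroup N] [Module A N] {ι : Type u} (S : ι → Submodule A N),
      iSupIndep S → iSup S = ⊤ → (∀ i, IsSimpleModule A ↥(S i)) →
      (∀ i, IsSigmaInjective A ↥(S i)) →
      ∀ reps : Fin n → ι, (∀ i, ∃ j, Nonempty (↥(S i) ≃ₗ[A] ↥(S (reps j)))) →
      Module.Injective A N := by
  induction n with
  | zero =>
    intro N _ _ ι S hInd hSup hSimple hSig reps hcov
    haveI : IsEmpty ι := ⟨fun i => (hcov i).elim fun j _ => j.elim0⟩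
    have hbot : (⊤ : Submodule A N) = ⊥ := by rw [← hSup]; exact iSup_of_empty S
    haveI : Subsingleton N := by
      constructor
      intro a b
      have ha : a ∈ (⊥ : Submodule A N) := hbot ▸ Submodule.mem_top
      have hb : b ∈ (⊥ : Submodule A N) := hbot ▸ Submodule.mem_top
      rw [Submodule.mem_bot] at ha hb
      rw [ha, hb]
    exact injSubsingleton
  | succ n IH =>
    intro N _ _ ι S hInd hSup hSimple hSig reps hcov
    classical
    by_cases hall : ∀ i, Nonempty (↥(S i) ≃ₗ[A] ↥(S (reps (Fin.last n))))
    · exact injOfInternalHomog S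
        (DirectSum.isInternal_submodule_of_iSupIndep_of_iSup_eq_top hInd hSup)
        ↥(S (reps (Fin.last n))) hall (hSig _)
    · push_neg at hall
      obtain ⟨i₀, hi₀⟩ := hall
      set Aset : Set ι := {i | Nonempty (↥(S i) ≃ₗ[A] ↥(S (reps (Fin.last n))))} with hAset
      have hdisj := blockDisjoint S hInd Aset
      have hsup2 : (⨆ i ∈ Aset, S i) ⊔ (⨆ i ∈ Asetᶜ, S i) = ⊤ := by
        rw [eq_top_iff, ← hSup]
        refine iSup_le fun i => ?_
        by_cases hi : i ∈ Aset
        · exact le_sup_of_le_left (le_biSup S hi)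
        · exact le_sup_of_le_right (le_biSup S (by simpa using hi))
      have hcompl : IsCompl (⨆ i ∈ Aset, S i) (⨆ i ∈ Asetᶜ, S i) :=
        ⟨hdisj, codisjoint_iff.mpr hsup2⟩
      have hintP := DirectSum.isInternal_biSup_submodule_of_iSupIndep (A := S) Aset
        (hInd.comp Subtype.val_injective)
      have hp : Module.Injective A ↥(⨆ i ∈ Aset, S i) := by
        refine injOfInternalHomog _ hintP ↥(S (reps (Fin.last n))) (fun i => ?_) (hSig _)
        have eB : ↥((S i.1).comap (⨆ i ∈ Aset, S i).subtype) ≃ₗ[A] ↥(S i.1) :=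
          Submodule.comapSubtypeEquivOfLe (le_biSup S i.2)
        exact ⟨eB.trans i.2.some⟩
      have hintP' := DirectSum.isInternal_biSup_submodule_of_iSupIndep (A := S) Asetᶜ
        (hInd.comp Subtype.val_injective)
      have hp' : Module.Injective A ↥(⨆ i ∈ Asetᶜ, S i) := by
        have eB' : ∀ i : ↥(Asetᶜ), ↥((S i.1).comap (⨆ i ∈ Asetᶜ, S i).subtype) ≃ₗ[A] ↥(S i.1) :=
          fun i => Submodule.comapSubtypeEquivOfLe (le_biSup S i.2)
        have hrepsnot : ∀ (j : Fin (n+1)) (i : ι), i ∉ Aset →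
            Nonempty (↥(S i) ≃ₗ[A] ↥(S (reps j))) → reps j ∉ Aset := by
          rintro j i hiA ⟨eij⟩ hrj
          exact hiA ⟨eij.trans hrj.some⟩
        have hi₀' : i₀ ∈ Asetᶜ := not_nonempty_iff.mpr hi₀
        have happly : ∀ {a b : ι}, a = b → (↥(S a) ≃ₗ[A] ↥(S b)) :=
          fun h => h ▸ LinearEquiv.refl A _
        refine IH (fun i : ↥(Asetᶜ) => (S i.1).comap (⨆ i ∈ Asetᶜ, S i).subtype)
          hintP'.submodule_iSupIndep hintP'.submodule_iSup_eq_top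
          (fun i => by haveI := hSimple i.1; exact IsSimpleModule.congr (eB' i))
          (fun i => sigmaInjCongr (eB' i).symm (hSig i.1))
          (fun j => if h : reps j.castSucc ∈ Aset then ⟨i₀, hi₀'⟩ else ⟨reps j.castSucc, h⟩)
          (fun i => ?_)
        obtain ⟨j, hj⟩ := hcov i.1
        have hjne : j ≠ Fin.last n := by
          intro hjeq
          rw [hjeq] at hj
          exact i.2 hj
        obtain ⟨j', hj'⟩ := Fin.exists_castSucc_eq.mpr hjne
        have hrj : reps j ∉ Aset := hrepsnot j i.1 i.2 hj
        refine ⟨j', ?_⟩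
        have h2 : reps j'.castSucc ∉ Aset := by
          rw [show j'.castSucc = j from hj']
          exact hrj
        have hval : ((if h : reps j'.castSucc ∈ Aset then (⟨i₀, hi₀'⟩ : ↥(Asetᶜ))
            else ⟨reps j'.castSucc, h⟩) : ↥(Asetᶜ)).1 = reps j := by
          rw [dif_neg h2]
          exact congrArg reps hj'
        exact ⟨(eB' i).trans ((hj.some.trans (happly hval.symm)).trans (eB' _).symm)⟩
      exact injCongr (Submodule.prodEquivOfIsCompl _ _ hcompl) (injProd hp hp')


theorem isoArtinianSubmodule {M : Type u} [AddCommGroup M] [Module A M]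
    (h : IsIsoArtinian A M) (p : Submodule A M) : IsIsoArtinian A ↥p := by
  intro f hf
  obtain ⟨n, hn⟩ := h (fun n => (f n).map p.subtype) (fun n => Submodule.map_mono (hf n))
  refine ⟨n, fun i hi => ?_⟩
  obtain ⟨e⟩ := hn i hi
  exact ⟨(Submodule.equivMapOfInjective p.subtype p.injective_subtype (f n)).trans
    (e.trans (Submodule.equivMapOfInjective p.subtype p.injective_subtype (f i)).symm)⟩

theorem finiteClasses {N : Type u} [AddCommGroup N] [Module A N] (hArt : IsIsoArtinian A N)
    {ι : Type u} (S : ι → Submodule A N) (hInd : iSupIndep S)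
    (hS : ∀ i, IsSimpleModule A ↥(S i)) :
    ∃ (n : ℕ) (reps : Fin n → ι), ∀ i, ∃ j, Nonempty (↥(S i) ≃ₗ[A] ↥(S (reps j))) := by
  classical
  by_contra hno
  push_neg at hno
  letI sd : Setoid ι := ⟨fun i j => Nonempty (↥(S i) ≃ₗ[A] ↥(S j)),
    ⟨fun i => ⟨LinearEquiv.refl A _⟩, fun ⟨e⟩ => ⟨e.symm⟩, fun ⟨e⟩ ⟨f⟩ => ⟨e.trans f⟩⟩⟩
  have hInf : Infinite (Quotient sd) := by
    rw [← not_finite_iff_infinite]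
    intro hfin
    haveI := Fintype.ofFinite (Quotient sd)
    obtain ⟨i, hi⟩ := hno (Fintype.card (Quotient sd))
      (fun j => ((Fintype.equivFin (Quotient sd)).symm j).out)
    refine (not_nonempty_iff.mpr (hi ((Fintype.equivFin (Quotient sd)) ⟦i⟧))) ?_
    have hq : (⟦((Fintype.equivFin (Quotient sd)).symm
        ((Fintype.equivFin (Quotient sd)) ⟦i⟧)).out⟧ : Quotient sd) = ⟦i⟧ := by
      rw [Quotient.out_eq, Equiv.symm_apply_apply]
    obtain ⟨e⟩ := Quotient.exact hq
    exact ⟨e.symm⟩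
  let emb := Infinite.natEmbedding (Quotient sd)
  let c : ℕ → ι := fun n => (emb n).out
  have hpair : ∀ m n : ℕ, m ≠ n → ¬Nonempty (↥(S (c m)) ≃ₗ[A] ↥(S (c n))) := by
    intro m n hmn ⟨e⟩
    apply hmn
    apply emb.injective
    rw [← Quotient.out_eq (emb m), ← Quotient.out_eq (emb n)]
    exact Quotient.sound ⟨e⟩
  -- descending chain
  let Jset : ℕ → Set ι := fun n => {i | ∀ m < n, ¬Nonempty (↥(S i) ≃ₗ[A] ↥(S (c m)))}
  let f : ℕ → Submodule A N := fun n => ⨆ i ∈ Jset n, S i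
  have hmono : ∀ n, f (n + 1) ≤ f n := by
    intro n
    refine biSup_mono fun i hi => ?_
    intro m hm
    exact hi m (hm.trans (Nat.lt_succ_self n))
  obtain ⟨n, hn⟩ := hArt f hmono
  obtain ⟨e⟩ := hn (n + 1) (Nat.le_succ n)
  -- S (c n) sits in f n
  have hcn : c n ∈ Jset n := fun m hm => hpair n m (by omega)
  have hle : S (c n) ≤ f n := le_biSup S hcn
  have eL : ↥(Submodule.map (f (n + 1)).subtype
      (Submodule.map e.toLinearMap ((S (c n)).comap (f n).subtype))) ≃ₗ[A] ↥(S (c n)) :=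
    ((Submodule.equivMapOfInjective (f (n+1)).subtype (f (n+1)).injective_subtype
        (Submodule.map e.toLinearMap ((S (c n)).comap (f n).subtype))).symm).trans
      (((Submodule.equivMapOfInjective e.toLinearMap e.injective
          ((S (c n)).comap (f n).subtype)).symm).trans
        (Submodule.comapSubtypeEquivOfLe hle))
  haveI : IsSimpleModule A ↥(S (c n)) := hS (c n)
  haveI : IsSimpleModule A ↥(Submodule.map (f (n + 1)).subtype
      (Submodule.map e.toLinearMap ((S (c n)).comap (f n).subtype))) := IsSimpleModule.congr eL
  obtain ⟨i, hiJ, ⟨w⟩⟩ := simpleLeBiSupIso S hInd hS (Jset (n+1))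
    (Submodule.map (f (n + 1)).subtype
      (Submodule.map e.toLinearMap ((S (c n)).comap (f n).subtype))) ‹_›
    (Submodule.map_subtype_le _ _)
  exact hiJ n (Nat.lt_succ_self n) ⟨w.symm.trans eL⟩


theorem existsIsoSimpleLe {M : Type u} [AddCommGroup M] [Module A M]
    (hArt : IsIsoArtinian A M) (N : Submodule A M) (hN : N ≠ ⊥) :
    ∃ K, K ≤ N ∧ K ≠ ⊥ ∧ IsIsoSimpleModule A ↥K := by
  by_contra hno
  push_neg at hno
  have step : ∀ K : {K : Submodule A M // K ≤ N ∧ K ≠ ⊥},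
      ∃ K' : {K : Submodule A M // K ≤ N ∧ K ≠ ⊥},
        K'.1 ≤ K.1 ∧ ¬Nonempty (↥K.1 ≃ₗ[A] ↥K'.1) := by
    rintro ⟨K, hKN, hKbot⟩
    haveI hnt : Nontrivial ↥K := Submodule.nontrivial_iff_ne_bot.mpr hKbot
    have hni := hno K hKN hKbot
    rw [IsIsoSimpleModule] at hni
    push_neg at hni
    obtain ⟨N', hN'bot, hN'iso⟩ := hni hnt
    refine ⟨⟨N'.map K.subtype, (Submodule.map_subtype_le K N').trans hKN, ?_⟩,
      Submodule.map_subtype_le K N', ?_⟩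
    · intro hb
      apply hN'bot
      exact Submodule.map_injective_of_injective K.injective_subtype
        (by rw [hb, Submodule.map_bot])
    · rintro ⟨e⟩
      exact (not_nonempty_iff.mpr hN'iso)
        ⟨e.trans (Submodule.equivMapOfInjective K.subtype K.injective_subtype N').symm⟩
  choose g hgle hgiso using step
  let seq : ℕ → {K : Submodule A M // K ≤ N ∧ K ≠ ⊥} :=
    fun n => Nat.rec ⟨N, le_rfl, hN⟩ (fun _ ih => g ih) n
  obtain ⟨n, hn⟩ := hArt (fun n => (seq n).1) (fun n => hgle (seq n))
  exact hgiso (seq n) (hn (n + 1) (Nat.le_succ n))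


end Aux

theorem isSimpleOfIsoSimple {R : Type u} [Ring R] (hR : IsRightSigmaVRing R)
    {T : Type u} [AddCommGroup T] [Module Rᵐᵒᵖ T]
    (hInj : Module.Injective Rᵐᵒᵖ T) (hT : IsIsoSimpleModule Rᵐᵒᵖ T) :
    IsSimpleModule Rᵐᵒᵖ T := by
  classical
  obtain ⟨hnt, hiso⟩ := hT
  obtain ⟨x, hx⟩ := exists_ne (0 : T)
  have hcomp := Submodule.singleton_span_isCompactElement (R := Rᵐᵒᵖ) x
  have hcoat := CompleteLattice.Iic_coatomic_of_compact_element hcomp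
  have hCbot : Submodule.span Rᵐᵒᵖ {x} ≠ ⊥ := by
    intro h
    exact hx (Submodule.span_singleton_eq_bot.mp h)
  rcases hcoat.eq_top_or_exists_le_coatom (⊥ : Set.Iic (Submodule.span Rᵐᵒᵖ {x}))
    with h | ⟨mhat, hm, _⟩
  · exfalso
    apply hCbot
    have := Subtype.ext_iff.mp h
    simpa using this.symm
  · have hcov : mhat.1 ⋖ Submodule.span Rᵐᵒᵖ {x} :=
      (covBy_iff_coatom_Iic mhat.2).mpr hm
    have hsimpleQ : IsSimpleModule Rᵐᵒᵖ
        (↥(Submodule.span Rᵐᵒᵖ {x}) ⧸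
          Submodule.comap (Submodule.span Rᵐᵒᵖ {x}).subtype mhat.1) :=
      (covBy_iff_quot_is_simple mhat.2).mp hcov
    haveI := hsimpleQ
    have hQinj := injOfSigmaInj (hR _ hsimpleQ)
    obtain ⟨F, hF⟩ := hQinj.out (Submodule.span Rᵐᵒᵖ {x}).subtype
      (Submodule.span Rᵐᵒᵖ {x}).injective_subtype
      ((Submodule.comap (Submodule.span Rᵐᵒᵖ {x}).subtype mhat.1).mkQ)
    have hxC : x ∈ Submodule.span Rᵐᵒᵖ {x} := Submodule.mem_span_singleton_self x
    have hFx : F x ≠ 0 := by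
      have h1 : F x = (Submodule.comap (Submodule.span Rᵐᵒᵖ {x}).subtype mhat.1).mkQ
          ⟨x, hxC⟩ := hF ⟨x, hxC⟩
      rw [h1]
      intro h2
      rw [Submodule.mkQ_apply, Submodule.Quotient.mk_eq_zero] at h2
      have hmem : x ∈ mhat.1 := h2
      have hle : Submodule.span Rᵐᵒᵖ {x} ≤ mhat.1 := by
        rw [Submodule.span_le]
        simpa using hmem
      exact hcov.1.ne (le_antisymm mhat.2 hle)
    have hF0 : F ≠ 0 := by
      intro h
      apply hFx
      rw [h]
      rfl
    have hrange : LinearMap.range F = ⊤ := by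
      rcases eq_bot_or_eq_top (LinearMap.range F) with h | h
      · exact absurd (LinearMap.range_eq_bot.mp h) hF0
      · exact h
    rcases eq_or_ne (LinearMap.ker F) ⊥ with hk | hk
    · exact IsSimpleModule.congr (LinearEquiv.ofBijective F
        ⟨LinearMap.ker_eq_bot.mp hk, LinearMap.range_eq_top.mp hrange⟩)
    · obtain ⟨eK⟩ := hiso (LinearMap.ker F) hk
      have hKinj : Module.Injective Rᵐᵒᵖ ↥(LinearMap.ker F) := injCongr eK hInj
      obtain ⟨q, hq⟩ := existsIsComplOfInj _ hKinj
      have hqbot : q ≠ ⊥ := by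
        intro hb
        apply hF0
        have h4 := codisjoint_iff.mp hq.codisjoint
        rw [hb, sup_bot_eq] at h4
        exact LinearMap.ker_eq_top.mp h4
      have hψinj : Function.Injective (F.comp q.subtype) := by
        rw [← LinearMap.ker_eq_bot, eq_bot_iff]
        intro z hz
        rw [LinearMap.mem_ker, LinearMap.comp_apply] at hz
        have hzm : (z : T) ∈ LinearMap.ker F ⊓ q := ⟨hz, z.2⟩
        rw [disjoint_iff.mp hq.disjoint, Submodule.mem_bot] at hzm
        simpa using Subtype.ext hzm
      have hψsurj : Function.Surjective (F.comp q.subtype) := by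
        rw [← LinearMap.range_eq_top, LinearMap.range_comp, Submodule.range_subtype]
        have h2 : Submodule.map F (q ⊔ LinearMap.ker F) = ⊤ := by
          rw [sup_comm, codisjoint_iff.mp hq.codisjoint, Submodule.map_top, hrange]
        rw [Submodule.map_sup] at h2
        have h3 : Submodule.map F (LinearMap.ker F) = ⊥ := by
          rw [eq_bot_iff]
          rintro y ⟨z, hz, rfl⟩
          simpa using hz
        rwa [h3, sup_bot_eq] at h2
      obtain ⟨eq'⟩ := hiso q hqbot
      exact IsSimpleModule.congr (eq'.trans (LinearEquiv.ofBijective _ ⟨hψinj, hψsurj⟩))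

theorem forwardMain {R : Type u} [Ring R] (hR : IsRightSigmaVRing R)
    (h1 : ∀ (M : Type u) [AddCommGroup M] [Module Rᵐᵒᵖ M],
      IsIsoSimpleModule Rᵐᵒᵖ M → Module.Injective Rᵐᵒᵖ M)
    (M : Type u) [AddCommGroup M] [Module Rᵐᵒᵖ M] (hArt : IsIsoArtinian Rᵐᵒᵖ M) :
    Module.Injective Rᵐᵒᵖ M ∧ IsSemisimpleModule Rᵐᵒᵖ M := by
  classical
  have hsimp : ∀ N : Submodule Rᵐᵒᵖ M, N ≠ ⊥ →
      ∃ K, K ≤ N ∧ K ≠ ⊥ ∧ IsSimpleModule Rᵐᵒᵖ ↥K := by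
    intro N hN
    obtain ⟨K, hKN, hKb, hKiso⟩ := existsIsoSimpleLe hArt N hN
    exact ⟨K, hKN, hKb, isSimpleOfIsoSimple hR (h1 ↥K hKiso) hKiso⟩
  set soc := sSup {m : Submodule Rᵐᵒᵖ M | IsSimpleModule Rᵐᵒᵖ ↥m} with hsoc
  have hsocSimples : sSup {m : Submodule Rᵐᵒᵖ ↥soc | IsSimpleModule Rᵐᵒᵖ ↥m} = ⊤ := by
    apply Submodule.map_injective_of_injective soc.injective_subtype
    rw [Submodule.map_subtype_top, sSup_eq_iSup', Submodule.map_iSup]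
    apply le_antisymm
    · exact iSup_le fun m => Submodule.map_subtype_le _ _
    · rw [hsoc]
      refine sSup_le fun T hT => ?_
      have hTle : T ≤ soc := le_sSup hT
      have hmc : Submodule.map soc.subtype (T.comap soc.subtype) = T := by
        rw [Submodule.map_comap_subtype]
        exact inf_eq_right.mpr hTle
      have hsimpleT : IsSimpleModule Rᵐᵒᵖ ↥(T.comap soc.subtype) := by
        haveI : IsSimpleModule Rᵐᵒᵖ ↥T := hT
        exact IsSimpleModule.congr (Submodule.comapSubtypeEquivOfLe hTle)
      rw [← hmc]
      exact le_iSup_of_le ⟨T.comap soc.subtype, hsimpleT⟩ le_rfl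
  haveI hss : IsSemisimpleModule Rᵐᵒᵖ ↥soc :=
    IsSemisimpleModule.of_sSup_simples_eq_top hsocSimples
  obtain ⟨s, hsInd, hsSup, hsSimple⟩ :=
    IsSemisimpleModule.exists_sSupIndep_sSup_simples_eq_top Rᵐᵒᵖ ↥soc
  have hiInd : iSupIndep (fun m : ↥s => (m : Submodule Rᵐᵒᵖ ↥soc)) := (sSupIndep_iff s).mp hsInd
  have hiSup : ⨆ m : ↥s, (m : Submodule Rᵐᵒᵖ ↥soc) = ⊤ := by
    rw [← sSup_eq_iSup']; exact hsSup
  have hArtSoc := isoArtinianSubmodule hArt soc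
  obtain ⟨n, reps, hcov⟩ := finiteClasses hArtSoc _ hiInd (fun m => hsSimple m.1 m.2)
  have hsocInj : Module.Injective Rᵐᵒᵖ ↥soc :=
    keyInd n _ hiInd hiSup (fun m => hsSimple m.1 m.2)
      (fun m => hR _ (hsSimple m.1 m.2)) reps hcov
  obtain ⟨q, hq⟩ := existsIsComplOfInj soc hsocInj
  have hqbot : q = ⊥ := by
    by_contra hqb
    obtain ⟨K, hKq, hKb, hKsimple⟩ := hsimp q hqb
    have hKsoc : K ≤ soc := le_sSup hKsimple
    have hKle : K ≤ soc ⊓ q := le_inf hKsoc hKq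
    rw [disjoint_iff.mp hq.disjoint] at hKle
    exact hKb (le_bot_iff.mp hKle)
  have hsocTop : soc = ⊤ := by
    have h4 := codisjoint_iff.mp hq.codisjoint
    rwa [hqbot, sup_bot_eq] at h4
  constructor
  · have hti : Module.Injective Rᵐᵒᵖ ↥(⊤ : Submodule Rᵐᵒᵖ M) := hsocTop ▸ hsocInj
    exact injCongr Submodule.topEquiv hti
  · rw [hsoc] at hsocTop
    exact IsSemisimpleModule.of_sSup_simples_eq_top hsocTop

/-- For a right Σ-V ring `R` the following are equivalent:
(1) every iso-simple right `R`-module is injective;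
(2) every iso-artinian right `R`-module is injective and semisimple. -/
theorem isoSimple_injective_iff_isoArtinian_injective_semisimple
    (R : Type u) [Ring R] (hR : IsRightSigmaVRing R) :
    (∀ (M : Type u) [AddCommGroup M] [Module Rᵐᵒᵖ M],
        IsIsoSimpleModule Rᵐᵒᵖ M → Module.Injective Rᵐᵒᵖ M) ↔
      (∀ (M : Type u) [AddCommGroup M] [Module Rᵐᵒᵖ M],
        IsIsoArtinian Rᵐᵒᵖ M → Module.Injective Rᵐᵒᵖ M ∧ IsSemisimpleModule Rᵐᵒᵖ M) := by
  constructor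
  · intro h1 M _ _ hArt
    exact forwardMain hR h1 M hArt
  · intro h2 M _ _ hIso
    have hArt : IsIsoArtinian Rᵐᵒᵖ M := by
      intro f hf
      by_cases hb : ∃ n, f n = ⊥
      · obtain ⟨n, hn⟩ := hb
        refine ⟨n, fun i hi => ?_⟩
        have hfi : f i = ⊥ := by
          have hle : f i ≤ f n := antitone_nat_of_succ_le hf hi
          rw [hn] at hle
          exact le_bot_iff.mp hle
        rw [hn, hfi]
        exact ⟨LinearEquiv.refl _ _⟩
      · push_neg at hb
        refine ⟨0, fun i _ => ?_⟩
        obtain ⟨e0⟩ := hIso.2 (f 0) (hb 0)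
        obtain ⟨ei⟩ := hIso.2 (f i) (hb i)
        exact ⟨e0.symm.trans ei⟩
    exact (h2 M hArt).1
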